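/- For every n ≥ 0: x_n = (1/π1)·E[(X1(n) − π1)²] = E[(X+(n) − π1)²] + (π2/π1)·E[(X−(n) − π2)²], and consequently x_n ≥ z_n ≥ 0. -/

import Mathlib

open Finset Filter

namespace AsymIsing

/-- Level-`k` vertices of the rooted `d`-ary tree: paths of length `k` from the root. -/
abbrev Vert (d k : ℕ) : Type := Fin k → Fin d

/-- A spin configuration on levels `0, …, n` of the `d`-ary tree. -/
abbrev Conf (d n : ℕ) : Type := ∀ k : Fin (n + 1), Vert d k → Fin 2

/-- A spin configuration on level `n` only. -/
abbrev LConf (d n : ℕ) : Type := Vert d n → Fin 2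

/-- The transition matrix of the asymmetric binary channel; the paper's state `1`
corresponds to the index `0` and the state `2` to the index `1`. -/
noncomputable def Mmat (θ Δ : ℝ) : Fin 2 → Fin 2 → ℝ := fun i j =>
  if i = 0 then (if j = 0 then (1 + θ - Δ) / 2 else (1 - θ + Δ) / 2)
  else (if j = 0 then (1 - θ - Δ) / 2 else (1 + θ + Δ) / 2)

/-- The stationary distribution `π = (π₁, π₂)` of the channel. -/
noncomputable def pst (θ Δ : ℝ) : Fin 2 → ℝ := fun i =>
  if i = 0 then 1 / 2 - Δ / (2 * (1 - θ)) else 1 / 2 + Δ / (2 * (1 - θ))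

/-- The root spin of a configuration. -/
def root {d n : ℕ} (σ : Conf d n) : Fin 2 := σ ⟨0, n.succ_pos⟩ (fun i => i.elim0)

/-- The restriction of a configuration to the last (`n`-th) level. -/
def top {d n : ℕ} (σ : Conf d n) : LConf d n := σ (Fin.last n)

/-- The probability of a full configuration on levels `0, …, n` under the broadcast
process: the root is drawn from `π` and spins propagate along edges via `M`. -/
noncomputable def confProb (d : ℕ) (θ Δ : ℝ) (n : ℕ) (σ : Conf d n) : ℝ :=
  pst θ Δ (root σ) *
    ∏ k : Fin n, ∏ v : Vert d (k + 1),
      Mmat θ Δ (σ k.castSucc (v ∘ Fin.castSucc)) (σ k.succ v)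

/-- `P(σ(n) = A)`: the marginal law of the level-`n` spins. -/
noncomputable def levelProb (d : ℕ) (θ Δ : ℝ) (n : ℕ) (A : LConf d n) : ℝ :=
  ∑ σ : Conf d n, if top σ = A then confProb d θ Δ n σ else 0

/-- `P(σ_ρ = i, σ(n) = A)`. -/
noncomputable def jointProb (d : ℕ) (θ Δ : ℝ) (n : ℕ) (i : Fin 2) (A : LConf d n) : ℝ :=
  ∑ σ : Conf d n, if root σ = i ∧ top σ = A then confProb d θ Δ n σ else 0

/-- The posterior `f_n(i, A) = P(σ_ρ = i ∣ σ(n) = A)`. -/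
noncomputable def post (d : ℕ) (θ Δ : ℝ) (n : ℕ) (i : Fin 2) (A : LConf d n) : ℝ :=
  jointProb d θ Δ n i A / levelProb d θ Δ n A

/-- The law of `σ^i(n)`, i.e. `P(σ(n) = A ∣ σ_ρ = i)`. -/
noncomputable def condLevel (d : ℕ) (θ Δ : ℝ) (n : ℕ) (i : Fin 2) (A : LConf d n) : ℝ :=
  jointProb d θ Δ n i A / pst θ Δ i

/-- The total variation distance between `σ^1(n)` and `σ^2(n)`. -/
noncomputable def tvDist (d : ℕ) (θ Δ : ℝ) (n : ℕ) : ℝ :=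
  (1 / 2) * ∑ A : LConf d n, |condLevel d θ Δ n 0 A - condLevel d θ Δ n 1 A|

/-- The reconstruction problem is solvable if `limsup_n d_TV(σ^1(n), σ^2(n)) > 0`. -/
def solvable (d : ℕ) (θ Δ : ℝ) : Prop :=
  0 < Filter.limsup (fun n => tvDist d θ Δ n) Filter.atTop

/-- Non-reconstruction: `limsup_n d_TV(σ^1(n), σ^2(n)) = 0`. -/
def nonReconstruction (d : ℕ) (θ Δ : ℝ) : Prop :=
  Filter.limsup (fun n => tvDist d θ Δ n) Filter.atTop = 0

/-- Expectation of a function of the level-`n` configuration, conditioned on `σ_ρ = 1`. -/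
noncomputable def expect1 (d : ℕ) (θ Δ : ℝ) (n : ℕ) (g : LConf d n → ℝ) : ℝ :=
  ∑ A : LConf d n, condLevel d θ Δ n 0 A * g A

/-- `x_n = E f_n(1, σ^1(n)) − π₁`. -/
noncomputable def xseq (d : ℕ) (θ Δ : ℝ) (n : ℕ) : ℝ :=
  expect1 d θ Δ n (fun A => post d θ Δ n 0 A) - pst θ Δ 0

/-- `z_n = E (f_n(1, σ^1(n)) − π₁)²`. -/
noncomputable def zseq (d : ℕ) (θ Δ : ℝ) (n : ℕ) : ℝ :=
  expect1 d θ Δ n (fun A => (post d θ Δ n 0 A - pst θ Δ 0) ^ 2)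

/-- The restriction of a level-`(n+1)` configuration to the subtree of the `j`-th
child of the root (paths starting with `j`). -/
def restrictChild {d n : ℕ} (j : Fin d) (A : LConf d (n + 1)) : LConf d n :=
  fun w => A (Fin.cons j w)

/-- `Y_j = f_n(1, σ_j(n+1))`, as a function of the level-`(n+1)` configuration. -/
noncomputable def Yfun (d : ℕ) (θ Δ : ℝ) (n : ℕ) (j : Fin d) (A : LConf d (n + 1)) : ℝ :=
  post d θ Δ n 0 (restrictChild j A)

/-- `Z₁ = ∏_j (1 + (θ/π₁)(Y_j − π₁))`, as a function of the level-`(n+1)` configuration. -/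
noncomputable def Z1fun (d : ℕ) (θ Δ : ℝ) (n : ℕ) (A : LConf d (n + 1)) : ℝ :=
  ∏ j : Fin d, (1 + (θ / pst θ Δ 0) * (Yfun d θ Δ n j A - pst θ Δ 0))

/-- `Z₂ = ∏_j (1 − (θ/π₂)(Y_j − π₁))`, as a function of the level-`(n+1)` configuration. -/
noncomputable def Z2fun (d : ℕ) (θ Δ : ℝ) (n : ℕ) (A : LConf d (n + 1)) : ℝ :=
  ∏ j : Fin d, (1 - (θ / pst θ Δ 1) * (Yfun d θ Δ n j A - pst θ Δ 0))

/-- The value of `Δ` making `π = (π₁, π₂)` the stationary distribution of the channel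
with second eigenvalue `θ`, namely `Δ = (1 − θ)(π₂ − π₁)`. -/
noncomputable def Dlt (θ π1 π2 : ℝ) : ℝ := (1 - θ) * (π2 - π1)

/-- The Gaussian-approximation function
`f(s) = E[π₁ e^{sμ₁+√s W₁} / (π₁ e^{sμ₁+√s W₁} + π₂ e^{sμ₂+√s W₂})] − π₁`,
where `μ₁ = 1/(2π₁)`, `μ₂ = −(1+π₂)/(2π₂²)`, `W₁ ∼ N(0, 1/π₁)` (realized as `w/√π₁`
for `w` standard Gaussian) and `W₂ = −(π₁/π₂)·W₁`. -/
noncomputable def gfun (π1 π2 : ℝ) (s : ℝ) : ℝ :=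
  (∫ w : ℝ,
      (π1 * Real.exp (s * (1 / (2 * π1)) + Real.sqrt s * (w / Real.sqrt π1))) /
        (π1 * Real.exp (s * (1 / (2 * π1)) + Real.sqrt s * (w / Real.sqrt π1)) +
          π2 * Real.exp (s * (-(1 + π2) / (2 * π2 ^ 2)) +
            Real.sqrt s * (-(π1 / π2) * (w / Real.sqrt π1))))
    ∂(ProbabilityTheory.gaussianReal 0 1)) - π1



lemma Mrow_sum (θ Δ : ℝ) (i : Fin 2) : ∑ j, Mmat θ Δ i j = 1 := by
  fin_cases i <;> simp [Mmat, Fin.sum_univ_two] <;> ring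

lemma pst_sum (θ Δ : ℝ) : pst θ Δ 0 + pst θ Δ 1 = 1 := by
  norm_num [pst]

lemma pst_pos (θ Δ : ℝ) (hθ1 : |θ| < 1) (hM : ∀ i j, 0 < Mmat θ Δ i j) (i : Fin 2) :
    0 < pst θ Δ i := by
  have hθ : 0 < 1 - θ := by have := abs_lt.mp hθ1; linarith [this.2]
  fin_cases i
  · have h := hM 1 0
    simp [Mmat] at h
    have e : pst θ Δ 0 = (1 - θ - Δ) / (2 * (1 - θ)) := by
      simp only [pst, if_pos rfl, ↓reduceIte]
      field_simp
    have : 0 < pst θ Δ 0 := by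
      rw [e]; exact div_pos (by linarith) (by linarith)
    exact this
  · have h := hM 0 1
    simp [Mmat] at h
    have e : pst θ Δ 1 = (1 - θ + Δ) / (2 * (1 - θ)) := by
      simp only [pst]
      norm_num
      field_simp
    have : 0 < pst θ Δ 1 := by
      rw [e]; exact div_pos (by linarith) (by linarith)
    exact this

noncomputable def tpr (d : ℕ) (θ Δ : ℝ) (n : ℕ) (σ : Conf d n) : ℝ :=
  ∏ k : Fin n, ∏ v : Vert d (k + 1),
    Mmat θ Δ (σ k.castSucc (v ∘ Fin.castSucc)) (σ k.succ v)

def confEquiv (d n : ℕ) : Conf d (n + 1) ≃ (Conf d n × LConf d (n + 1)) where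
  toFun σ := (fun k => σ k.castSucc, σ (Fin.last (n + 1)))
  invFun p := fun k => Fin.snoc (α := fun j : Fin (n + 2) => Vert d j → Fin 2) p.1 p.2 k
  left_inv σ := by
    funext k
    induction k using Fin.lastCases with
    | last => exact Fin.snoc_last _ _
    | cast j => exact Fin.snoc_castSucc _ _ _
  right_inv p := by
    refine Prod.ext ?_ ?_
    · funext k; simp
    · simp

lemma htpr (d : ℕ) (θ Δ : ℝ) (n : ℕ) (σ : Conf d (n + 1)) :
    tpr d θ Δ (n + 1) σ =
      tpr d θ Δ n (fun k => σ k.castSucc) *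
        ∏ v : Vert d (n + 1),
          Mmat θ Δ (σ (Fin.castSucc (Fin.last n)) (v ∘ Fin.castSucc)) (σ (Fin.last (n + 1)) v) := by
  unfold tpr
  rw [Fin.prod_univ_castSucc]
  rfl

lemma hBsum (θ Δ : ℝ) (d n : ℕ) (a : Vert d (n + 1) → Fin 2) :
    ∑ B : LConf d (n + 1), ∏ v : Vert d (n + 1), Mmat θ Δ (a v) (B v) = 1 := by
  rw [← Fintype.prod_sum (fun v j => Mmat θ Δ (a v) j)]
  simp only [Mrow_sum]
  simp

lemma tpr_sum (d : ℕ) (θ Δ : ℝ) (i : Fin 2) :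
    ∀ n : ℕ, ∑ σ : Conf d n, (if root σ = i then tpr d θ Δ n σ else 0) = 1 := by
  intro n
  induction n with
  | zero =>
      rw [Finset.sum_eq_single (fun _ _ => i : Conf d 0)]
      · simp [root, tpr]
      · intro σ _ hne
        have hroot : ¬ root σ = i := by
          intro h
          apply hne
          funext k v
          have hk := Fin.eq_zero k
          subst hk
          have hv : v = (fun j => j.elim0) := funext fun j => j.elim0
          subst hv
          exact h
        simp [hroot]
      · intro h; exact absurd (Finset.mem_univ _) h
  | succ n ih =>
      have hpt : ∀ σ : Conf d (n + 1),
          (if root σ = i then tpr d θ Δ (n + 1) σ else 0) =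
          (fun p : Conf d n × LConf d (n + 1) =>
            if root p.1 = i then
              tpr d θ Δ n p.1 *
                ∏ v : Vert d (n + 1),
                  Mmat θ Δ (p.1 (Fin.last n) (v ∘ Fin.castSucc)) (p.2 v) else 0)
            ((confEquiv d n) σ) := by
        intro σ
        rw [htpr d θ Δ n σ]
        rfl
      rw [Fintype.sum_equiv (confEquiv d n)
        (fun σ => if root σ = i then tpr d θ Δ (n + 1) σ else 0)
        (fun p : Conf d n × LConf d (n + 1) =>
            if root p.1 = i then
              tpr d θ Δ n p.1 *
                ∏ v : Vert d (n + 1),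
                  Mmat θ Δ (p.1 (Fin.last n) (v ∘ Fin.castSucc)) (p.2 v) else 0)
        hpt]
      rw [Fintype.sum_prod_type]
      calc (∑ τ : Conf d n, ∑ B : LConf d (n + 1),
              (fun p : Conf d n × LConf d (n + 1) =>
                if root p.1 = i then
                  tpr d θ Δ n p.1 *
                    ∏ v : Vert d (n + 1),
                      Mmat θ Δ (p.1 (Fin.last n) (v ∘ Fin.castSucc)) (p.2 v) else 0) (τ, B))
          = ∑ τ : Conf d n, (if root τ = i then tpr d θ Δ n τ else 0) := by
            apply Finset.sum_congr rfl
            intro τ _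
            show (∑ B : LConf d (n + 1),
              if root τ = i then
                tpr d θ Δ n τ *
                  ∏ v : Vert d (n + 1),
                    Mmat θ Δ (τ (Fin.last n) (v ∘ Fin.castSucc)) (B v) else 0) = _
            by_cases h : root τ = i
            · simp only [h, eq_self_iff_true, if_true, ← Finset.mul_sum]
              rw [hBsum, mul_one]
            · simp [h]
        _ = 1 := ih

lemma mass (d : ℕ) (θ Δ : ℝ) (n : ℕ) (i : Fin 2) :
    ∑ σ : Conf d n, (if root σ = i then confProb d θ Δ n σ else 0) = pst θ Δ i := by
  have key : ∀ σ : Conf d n, (if root σ = i then confProb d θ Δ n σ else 0)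
      = pst θ Δ i * (if root σ = i then tpr d θ Δ n σ else 0) := by
    intro σ
    by_cases h : root σ = i
    · have e : confProb d θ Δ n σ = pst θ Δ (root σ) * tpr d θ Δ n σ := rfl
      rw [if_pos h, if_pos h, e, h]
    · rw [if_neg h, if_neg h, mul_zero]
  rw [Finset.sum_congr rfl (fun σ _ => key σ), ← Finset.mul_sum, tpr_sum, mul_one]

lemma joint_total (d : ℕ) (θ Δ : ℝ) (n : ℕ) (i : Fin 2) :
    ∑ A : LConf d n, jointProb d θ Δ n i A = pst θ Δ i := by
  unfold jointProb
  rw [Finset.sum_comm, ← mass d θ Δ n i]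
  apply Finset.sum_congr rfl
  intro σ _
  by_cases h : root σ = i
  · simp [h, Finset.sum_ite_eq]
  · simp [h]

lemma level_eq (d : ℕ) (θ Δ : ℝ) (n : ℕ) (A : LConf d n) :
    levelProb d θ Δ n A = jointProb d θ Δ n 0 A + jointProb d θ Δ n 1 A := by
  unfold levelProb jointProb
  rw [← Finset.sum_add_distrib]
  apply Finset.sum_congr rfl
  intro σ _
  by_cases ht : top σ = A
  · by_cases h : root σ = 0
    · simp [ht, h]
    · have h1 : root σ = 1 := Fin.eq_one_of_ne_zero _ h
      simp [ht, h1]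
  · simp [ht]

lemma confProb_nonneg (d : ℕ) (θ Δ : ℝ) (hθ1 : |θ| < 1) (hM : ∀ i j, 0 < Mmat θ Δ i j)
    (n : ℕ) (σ : Conf d n) : 0 ≤ confProb d θ Δ n σ :=
  mul_nonneg (pst_pos θ Δ hθ1 hM (root σ)).le
    (Finset.prod_nonneg fun _ _ => Finset.prod_nonneg fun _ _ => (hM _ _).le)

lemma joint_nonneg (d : ℕ) (θ Δ : ℝ) (hθ1 : |θ| < 1) (hM : ∀ i j, 0 < Mmat θ Δ i j)
    (n : ℕ) (i : Fin 2) (A : LConf d n) : 0 ≤ jointProb d θ Δ n i A :=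
  Finset.sum_nonneg fun σ _ => by
    by_cases h : root σ = i ∧ top σ = A
    · rw [if_pos h]; exact confProb_nonneg d θ Δ hθ1 hM n σ
    · rw [if_neg h]




lemma calc_all {α : Type*} [Fintype α] (π1 π2 : ℝ) (hπ1 : 0 < π1) (hπ2 : 0 < π2)
    (hs : π1 + π2 = 1) (J0 J1 : α → ℝ) (h0 : ∀ a, 0 ≤ J0 a) (h1 : ∀ a, 0 ≤ J1 a)
    (hJ0 : ∑ a, J0 a = π1) (hJ1 : ∑ a, J1 a = π2) :
    (∑ a, (J0 a / π1) * (J0 a / (J0 a + J1 a)) - π1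
        = (1 / π1) * ∑ a, (J0 a + J1 a) * (J0 a / (J0 a + J1 a) - π1) ^ 2)
    ∧ (∑ a, (J0 a / π1) * (J0 a / (J0 a + J1 a)) - π1
        = (∑ a, (J0 a / π1) * (J0 a / (J0 a + J1 a) - π1) ^ 2)
          + (π2 / π1) * ∑ a, (J1 a / π2) * (J1 a / (J0 a + J1 a) - π2) ^ 2)
    ∧ (∑ a, (J0 a / π1) * (J0 a / (J0 a + J1 a) - π1) ^ 2
        ≤ ∑ a, (J0 a / π1) * (J0 a / (J0 a + J1 a)) - π1)
    ∧ (0 ≤ ∑ a, (J0 a / π1) * (J0 a / (J0 a + J1 a) - π1) ^ 2) := by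
  have hne1 : π1 ≠ 0 := ne_of_gt hπ1
  have hne2 : π2 ≠ 0 := ne_of_gt hπ2
  have hzero : ∀ a, J0 a + J1 a = 0 → J0 a = 0 ∧ J1 a = 0 := by
    intro a h
    constructor <;> [skip; skip] <;> nlinarith [h0 a, h1 a]
  have key1 : ∀ a, (J0 a + J1 a) * (J0 a / (J0 a + J1 a) - π1) ^ 2
      = J0 a * (J0 a / (J0 a + J1 a)) - 2 * π1 * J0 a + π1 ^ 2 * (J0 a + J1 a) := by
    intro a
    by_cases h : J0 a + J1 a = 0
    · obtain ⟨e0, e1⟩ := hzero a h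
      rw [e0, e1]; norm_num
    · field_simp
      ring
  have key2 : ∀ a, J0 a * (J0 a / (J0 a + J1 a) - π1) ^ 2
        + J1 a * (J1 a / (J0 a + J1 a) - π2) ^ 2
      = (J0 a + J1 a) * (J0 a / (J0 a + J1 a) - π1) ^ 2 := by
    intro a
    by_cases h : J0 a + J1 a = 0
    · obtain ⟨e0, e1⟩ := hzero a h
      rw [e0, e1]; norm_num
    · have hp2 : π2 = 1 - π1 := by linarith
      subst hp2
      field_simp
      ring
  have hLsum : ∑ a, (J0 a + J1 a) = 1 := by
    rw [Finset.sum_add_distrib, hJ0, hJ1, hs]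
  have e1 : ∑ a, (J0 a / π1) * (J0 a / (J0 a + J1 a))
      = (1 / π1) * ∑ a, J0 a * (J0 a / (J0 a + J1 a)) := by
    rw [Finset.mul_sum]
    exact Finset.sum_congr rfl fun a _ => by ring
  have hsum1 : ∑ a, (J0 a + J1 a) * (J0 a / (J0 a + J1 a) - π1) ^ 2
      = (∑ a, J0 a * (J0 a / (J0 a + J1 a))) - 2 * π1 * π1 + π1 ^ 2 := by
    rw [Finset.sum_congr rfl fun a _ => key1 a, Finset.sum_add_distrib,
      Finset.sum_sub_distrib, ← Finset.mul_sum, ← Finset.mul_sum, hJ0, hLsum]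
    ring
  have st1 : ∑ a, (J0 a / π1) * (J0 a / (J0 a + J1 a)) - π1
      = (1 / π1) * ∑ a, (J0 a + J1 a) * (J0 a / (J0 a + J1 a) - π1) ^ 2 := by
    rw [e1, hsum1]
    field_simp
    ring
  have e2 : (∑ a, (J0 a / π1) * (J0 a / (J0 a + J1 a) - π1) ^ 2)
        + (π2 / π1) * ∑ a, (J1 a / π2) * (J1 a / (J0 a + J1 a) - π2) ^ 2
      = (1 / π1) * ∑ a, (J0 a + J1 a) * (J0 a / (J0 a + J1 a) - π1) ^ 2 := by
    rw [Finset.mul_sum, Finset.mul_sum, ← Finset.sum_add_distrib]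
    refine Finset.sum_congr rfl fun a _ => ?_
    have e3 : (J0 a / π1) * (J0 a / (J0 a + J1 a) - π1) ^ 2
          + (π2 / π1) * ((J1 a / π2) * (J1 a / (J0 a + J1 a) - π2) ^ 2)
        = (1 / π1) * (J0 a * (J0 a / (J0 a + J1 a) - π1) ^ 2
            + J1 a * (J1 a / (J0 a + J1 a) - π2) ^ 2) := by
      field_simp
    rw [e3, key2 a]
  have st2 : ∑ a, (J0 a / π1) * (J0 a / (J0 a + J1 a)) - π1
      = (∑ a, (J0 a / π1) * (J0 a / (J0 a + J1 a) - π1) ^ 2)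
        + (π2 / π1) * ∑ a, (J1 a / π2) * (J1 a / (J0 a + J1 a) - π2) ^ 2 :=
    st1.trans e2.symm
  have hz : 0 ≤ ∑ a, (J0 a / π1) * (J0 a / (J0 a + J1 a) - π1) ^ 2 :=
    Finset.sum_nonneg fun a _ =>
      mul_nonneg (div_nonneg (h0 a) hπ1.le) (sq_nonneg _)
  have hw : 0 ≤ (π2 / π1) * ∑ a, (J1 a / π2) * (J1 a / (J0 a + J1 a) - π2) ^ 2 :=
    mul_nonneg (div_nonneg hπ2.le hπ1.le)
      (Finset.sum_nonneg fun a _ =>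
        mul_nonneg (div_nonneg (h1 a) hπ2.le) (sq_nonneg _))
  exact ⟨st1, st2, by linarith, hz⟩

/-- For every `n ≥ 0`,
`x_n = (1/π₁)·E[(X₁(n) − π₁)²] = E[(X⁺(n) − π₁)²] + (π₂/π₁)·E[(X⁻(n) − π₂)²]`,
and consequently `x_n ≥ z_n ≥ 0`. -/
theorem xseq_second_moment_identities (d : ℕ) (hd : 2 ≤ d) (θ Δ : ℝ) (hθ0 : θ ≠ 0) (hθ1 : |θ| < 1)
    (hθΔ : |θ| + |Δ| ≤ 1) (hM : ∀ i j, 0 < Mmat θ Δ i j)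
    (hord : pst θ Δ 1 ≤ pst θ Δ 0) :
    ∀ n : ℕ,
      xseq d θ Δ n =
        (1 / pst θ Δ 0) *
          ∑ A : LConf d n, levelProb d θ Δ n A * (post d θ Δ n 0 A - pst θ Δ 0) ^ 2 ∧
      xseq d θ Δ n =
        zseq d θ Δ n +
          (pst θ Δ 1 / pst θ Δ 0) *
            ∑ A : LConf d n, condLevel d θ Δ n 1 A * (post d θ Δ n 1 A - pst θ Δ 1) ^ 2 ∧
      zseq d θ Δ n ≤ xseq d θ Δ n ∧ 0 ≤ zseq d θ Δ n := by
  intro n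
  have hπ1 := pst_pos θ Δ hθ1 hM 0
  have hπ2 := pst_pos θ Δ hθ1 hM 1
  have hs := pst_sum θ Δ
  have h0 : ∀ A : LConf d n, 0 ≤ jointProb d θ Δ n 0 A :=
    fun A => joint_nonneg d θ Δ hθ1 hM n 0 A
  have h1 : ∀ A : LConf d n, 0 ≤ jointProb d θ Δ n 1 A :=
    fun A => joint_nonneg d θ Δ hθ1 hM n 1 A
  have hlev : ∀ A : LConf d n,
      levelProb d θ Δ n A = jointProb d θ Δ n 0 A + jointProb d θ Δ n 1 A :=
    level_eq d θ Δ n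
  obtain ⟨c1, c2, c3, c4⟩ := calc_all (pst θ Δ 0) (pst θ Δ 1) hπ1 hπ2 hs
    (fun A : LConf d n => jointProb d θ Δ n 0 A) (fun A : LConf d n => jointProb d θ Δ n 1 A)
    h0 h1 (joint_total d θ Δ n 0) (joint_total d θ Δ n 1)
  simp only [xseq, zseq, expect1, post, condLevel, hlev]
  exact ⟨c1, c2, c3, c4⟩


end AsymIsing
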